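/- arXiv:2309.16350 — 2 statements merged into one kernel-verified Lean document; each statement's English description precedes it below -/
import Mathlib

section
/- Hölder continuity in the position variable: if u ∈ C^α with α ∈ (0, 1+ϑ], then there exists a constant c > 0, depending only on d, ϑ and α, such that |u(t,x,v) − u(t,x+h,v)| ≤ c · ‖u‖_{C^α} · |h|^{α/(ϑ+1)} for all (t,x,v) ∈ ℝ×ℝ^{2d} and all h ∈ ℝ^d. -/
noncomputable section
open scoped BigOperators ENNReal

/-- Points of the Galilean group `ℝ × ℝ^d × ℝ^d`, written `z = (t, x, v)`. -/
abbrev Pt (d : ℕ) := ℝ × EuclideanSpace ℝ (Fin d) × EuclideanSpace ℝ (Fin d)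

variable {d : ℕ}

/-- Flow of the drift field `Y = ⟨v, ∇ₓ⟩ + ∂ₜ`. -/
def flowY (τ : ℝ) (z : Pt d) : Pt d := (z.1 + τ, z.2.1 + τ • z.2.2, z.2.2)

/-- Flow of the field `Z_h = ⟨h, ∇_v⟩`. -/
def flowZ (h : EuclideanSpace ℝ (Fin d)) (τ : ℝ) (z : Pt d) : Pt d :=
  (z.1, z.2.1, z.2.2 + τ • h)

/-- Flow of the constant field `⟨h, ∇ₓ⟩`. -/
def flowX (h : EuclideanSpace ℝ (Fin d)) (τ : ℝ) (z : Pt d) : Pt d :=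
  (z.1, z.2.1 + τ • h, z.2.2)

/-- `u` has a Lie derivative at `z` along the flow `φ`. -/
def HasLieAt (φ : ℝ → Pt d → Pt d) (u : Pt d → ℝ) (z : Pt d) : Prop :=
  DifferentiableAt ℝ (fun τ => u (φ τ z)) 0

/-- Lie derivative along `Y` (junk value if it does not exist). -/
def lieY (u : Pt d → ℝ) (z : Pt d) : ℝ := deriv (fun τ => u (flowY τ z)) 0

/-- Partial derivative `∂_{v_i}` as a Lie derivative along `Z_i`. -/
def dv (i : Fin d) (u : Pt d → ℝ) (z : Pt d) : ℝ :=
  deriv (fun τ => u (flowZ (EuclideanSpace.single i 1) τ z)) 0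

/-- Partial derivative `∂_{x_i}`. -/
def dx (i : Fin d) (u : Pt d → ℝ) (z : Pt d) : ℝ :=
  deriv (fun τ => u (flowX (EuclideanSpace.single i 1) τ z)) 0

/-- The list of indices associated to a multi-index `β` (index `i` repeated `β i` times). -/
def idxList (β : Fin d → ℕ) : List (Fin d) := (List.ofFn fun i => List.replicate (β i) i).flatten

/-- Iterated application of first-order operators along a list of indices. -/
def derivList (D : Fin d → (Pt d → ℝ) → Pt d → ℝ) : List (Fin d) → (Pt d → ℝ) → Pt d → ℝ
  | [], u => u
  | i :: l, u => D i (derivList D l u)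

/-- `∂_v^β u`. -/
def dvPow (β : Fin d → ℕ) (u : Pt d → ℝ) : Pt d → ℝ := derivList dv (idxList β) u

/-- `∂_x^γ u`. -/
def dxPow (γ : Fin d → ℕ) (u : Pt d → ℝ) : Pt d → ℝ := derivList dx (idxList γ) u

/-- All the intermediate derivatives in an iterated derivative exist at every point. -/
def ExistsDList (φ : Fin d → ℝ → Pt d → Pt d) (D : Fin d → (Pt d → ℝ) → Pt d → ℝ) :
    List (Fin d) → (Pt d → ℝ) → Prop
  | [], _ => True
  | i :: l, u => ExistsDList φ D l u ∧ ∀ z, HasLieAt (φ i) (derivList D l u) z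

/-- `∂_v^β u` exists (at every point, at every stage). -/
def ExistsDvPow (β : Fin d → ℕ) (u : Pt d → ℝ) : Prop :=
  ExistsDList (fun i => flowZ (EuclideanSpace.single i 1)) dv (idxList β) u

/-- `∂_x^γ u` exists (at every point, at every stage). -/
def ExistsDxPow (γ : Fin d → ℕ) (u : Pt d → ℝ) : Prop :=
  ExistsDList (fun i => flowX (EuclideanSpace.single i 1)) dx (idxList γ) u

/-- The iterated Lie derivatives `Y^j u`, `j = 1, …, k`, exist at every point. -/
def ExistsLieYIter (u : Pt d → ℝ) : ℕ → Prop
  | 0 => True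
  | k + 1 => ExistsLieYIter u k ∧ ∀ z : Pt d, HasLieAt flowY (lieY^[k] u) z

/-- Hölder seminorm `‖u‖_{C^α_{Z_i}}`. -/
def semiZ (i : Fin d) (α : ℝ) (u : Pt d → ℝ) : ℝ≥0∞ :=
  ⨆ (z : Pt d) (τ : ℝ) (_ : τ ≠ 0),
    ENNReal.ofReal (|u (flowZ (EuclideanSpace.single i 1) τ z) - u z| / |τ| ^ α)

/-- Hölder seminorm `‖u‖_{C^α_Y}`. -/
def semiY (ϑ α : ℝ) (u : Pt d → ℝ) : ℝ≥0∞ :=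
  ⨆ (z : Pt d) (τ : ℝ) (_ : τ ≠ 0),
    ENNReal.ofReal (|u (flowY τ z) - u z| / |τ| ^ (α / ϑ))

open Classical in
/-- The intrinsic Hölder seminorm `‖u‖_{C^α}`, defined recursively (with fuel). -/
def hNormAux (ϑ : ℝ) : ℕ → ℝ → (Pt d → ℝ) → ℝ≥0∞
  | 0, α, u => semiY ϑ α u + ∑ i, semiZ i α u
  | n + 1, α, u =>
    if α ≤ min 1 ϑ then semiY ϑ α u + ∑ i, semiZ i α u
    else if α ≤ max 1 ϑ then
      if ϑ < 1 then hNormAux ϑ n (α - ϑ) (lieY u) + ∑ i, semiZ i α u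
      else semiY ϑ α u + ∑ i, hNormAux ϑ n (α - 1) (dv i u)
    else hNormAux ϑ n (α - ϑ) (lieY u) + ∑ i, hNormAux ϑ n (α - 1) (dv i u)

open Classical in
/-- Membership in the intrinsic Hölder space `C^α`, defined recursively (with fuel). -/
def memAux (ϑ : ℝ) : ℕ → ℝ → (Pt d → ℝ) → Prop
  | 0, α, u => hNormAux ϑ 0 α u ≠ ⊤
  | n + 1, α, u =>
    if α ≤ min 1 ϑ then hNormAux ϑ (n + 1) α u ≠ ⊤
    else if α ≤ max 1 ϑ then
      if ϑ < 1 then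
        (∀ z : Pt d, HasLieAt flowY u z) ∧ memAux ϑ n (α - ϑ) (lieY u) ∧
          hNormAux ϑ (n + 1) α u ≠ ⊤
      else
        (∀ (i : Fin d) (z : Pt d), HasLieAt (flowZ (EuclideanSpace.single i 1)) u z) ∧
          (∀ i : Fin d, memAux ϑ n (α - 1) (dv i u)) ∧ hNormAux ϑ (n + 1) α u ≠ ⊤
    else
      (∀ z : Pt d, HasLieAt flowY u z) ∧ memAux ϑ n (α - ϑ) (lieY u) ∧
        (∀ (i : Fin d) (z : Pt d), HasLieAt (flowZ (EuclideanSpace.single i 1)) u z) ∧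
          (∀ i : Fin d, memAux ϑ n (α - 1) (dv i u)) ∧ hNormAux ϑ (n + 1) α u ≠ ⊤

/-- Enough fuel for the recursion defining `C^α`. -/
def fuel (ϑ α : ℝ) : ℕ := Nat.ceil (α / min 1 ϑ) + 1

/-- The intrinsic Hölder seminorm `‖u‖_{C^α}` (value in `ℝ≥0∞`). -/
def holderNorm (ϑ α : ℝ) (u : Pt d → ℝ) : ℝ≥0∞ := hNormAux ϑ (fuel ϑ α) α u

/-- `u ∈ C^α`. -/
def IsHolder (ϑ α : ℝ) (u : Pt d → ℝ) : Prop := memAux ϑ (fuel ϑ α) α u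




set_option maxHeartbeats 1000000

namespace HPV


abbrev E (d : ℕ) := EuclideanSpace ℝ (Fin d)

def xsh (ξ : E d) (z : Pt d) : Pt d := (z.1, z.2.1 + ξ, z.2.2)
def vsh (η : E d) (z : Pt d) : Pt d := (z.1, z.2.1, z.2.2 + η)

@[simp] lemma flowY_zero (z : Pt d) : flowY 0 z = z := by simp [flowY]
@[simp] lemma flowZ_zero (h : E d) (z : Pt d) : flowZ h 0 z = z := by simp [flowZ]
@[simp] lemma xsh_zero (z : Pt d) : xsh 0 z = z := by simp [xsh]
@[simp] lemma vsh_zero (z : Pt d) : vsh 0 z = z := by simp [vsh]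

lemma flowY_flowY (a b : ℝ) (z : Pt d) : flowY a (flowY b z) = flowY (a + b) z := by
  simp only [flowY]
  refine Prod.ext (by ring) (Prod.ext ?_ rfl)
  show z.2.1 + b • z.2.2 + a • z.2.2 = z.2.1 + (a + b) • z.2.2
  rw [add_smul]; abel

lemma flowZ_flowZ (h : E d) (a b : ℝ) (z : Pt d) :
    flowZ h a (flowZ h b z) = flowZ h (a + b) z := by
  simp only [flowZ]
  refine Prod.ext rfl (Prod.ext rfl ?_)
  show z.2.2 + b • h + a • h = z.2.2 + (a + b) • h
  rw [add_smul]; abel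

lemma hasDerivAt_of_lieY {u : Pt d → ℝ} (hu : ∀ p, HasLieAt flowY u p) (z : Pt d) (s : ℝ) :
    HasDerivAt (fun s' => u (flowY s' z)) (lieY u (flowY s z)) s := by
  have h1 : HasDerivAt (fun τ => u (flowY τ (flowY s z))) (lieY u (flowY s z)) 0 :=
    (hu (flowY s z)).hasDerivAt
  have h1' : HasDerivAt (fun τ => u (flowY τ (flowY s z))) (lieY u (flowY s z)) (s - s) := by
    rw [sub_self]; exact h1
  have h2 : HasDerivAt (fun s' : ℝ => s' - s) 1 s := (hasDerivAt_id s).sub_const s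
  have h3 := h1'.comp (h := fun s' => s' - s) s h2
  simp only [Function.comp_def, flowY_flowY, sub_add_cancel, mul_one] at h3
  exact h3

lemma hasDerivAt_of_dv {u : Pt d → ℝ} (i : Fin d)
    (hu : ∀ p, HasLieAt (flowZ (EuclideanSpace.single i 1)) u p) (z : Pt d) (s : ℝ) :
    HasDerivAt (fun s' => u (flowZ (EuclideanSpace.single i 1) s' z))
      (dv i u (flowZ (EuclideanSpace.single i 1) s z)) s := by
  have h1 : HasDerivAt (fun τ => u (flowZ (EuclideanSpace.single i 1) τ
      (flowZ (EuclideanSpace.single i 1) s z)))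
      (dv i u (flowZ (EuclideanSpace.single i 1) s z)) (s - s) := by
    rw [sub_self]; exact (hu _).hasDerivAt
  have h2 : HasDerivAt (fun s' : ℝ => s' - s) 1 s := (hasDerivAt_id s).sub_const s
  have h3 := h1.comp (h := fun s' => s' - s) s h2
  simp only [Function.comp_def, flowZ_flowZ, sub_add_cancel, mul_one] at h3
  exact h3

/-- Mean value inequality on a possibly reversed segment from `0` to `b`. -/
lemma abs_sub_le_mvt {f g : ℝ → ℝ} {C b : ℝ} (hC : 0 ≤ C)
    (hf : ∀ x, HasDerivAt f (g x) x)
    (hb : ∀ s ∈ Set.Icc (0:ℝ) 1, |g (s * b)| ≤ C) : |f b - f 0| ≤ C * |b| := by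
  have hF : ∀ s ∈ Set.Icc (0:ℝ) 1, HasDerivWithinAt (fun s => f (s * b)) (g (s * b) * b)
      (Set.Icc (0:ℝ) 1) s := by
    intro s _
    exact (((hf (s * b)).comp s ((hasDerivAt_id s).mul_const b)).congr_deriv
      (by ring)).hasDerivWithinAt
  have bound : ∀ s ∈ Set.Ico (0:ℝ) 1, ‖g (s * b) * b‖ ≤ C * |b| := by
    intro s hs
    rw [Real.norm_eq_abs, abs_mul]
    exact mul_le_mul_of_nonneg_right (hb s ⟨hs.1, hs.2.le⟩) (abs_nonneg b)
  have := norm_image_sub_le_of_norm_deriv_le_segment' hF bound 1 (by norm_num)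
  simpa using this


lemma abs_coord_le (x : E d) (i : Fin d) : |x i| ≤ ‖x‖ := by
  rw [EuclideanSpace.norm_eq]
  rw [show |x i| = √(‖x i‖ ^ 2) by
    rw [Real.sqrt_sq (abs_nonneg _) |>.symm]; simp [Real.norm_eq_abs]]
  apply Real.sqrt_le_sqrt
  exact Finset.single_le_sum (f := fun j => ‖x j‖ ^ 2) (fun j _ => sq_nonneg _) (Finset.mem_univ i)

lemma sum_coord_single (x : E d) :
    (∑ j : Fin d, x j • EuclideanSpace.single j (1:ℝ)) = x := by
  ext j
  rw [show (∑ i : Fin d, x i • EuclideanSpace.single i (1:ℝ)) j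
      = ∑ i : Fin d, (x i • EuclideanSpace.single i (1:ℝ)) j from
    by rw [WithLp.ofLp_sum]; exact Finset.sum_apply j Finset.univ _]
  simp [EuclideanSpace.single_apply]

/-- pointwise bound from `semiZ`. -/
lemma semiZ_pt {α : ℝ} (hα : 0 < α) {u : Pt d → ℝ} {i : Fin d}
    (hfin : semiZ i α u ≠ ⊤) (z : Pt d) (τ : ℝ) :
    |u (flowZ (EuclideanSpace.single i 1) τ z) - u z| ≤ (semiZ i α u).toReal * |τ| ^ α := by
  rcases eq_or_ne τ 0 with rfl | hτ
  · simp [Real.zero_rpow hα.ne']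
  · have h1 : ENNReal.ofReal (|u (flowZ (EuclideanSpace.single i 1) τ z) - u z| / |τ| ^ α)
        ≤ semiZ i α u := by
      refine le_trans ?_ (le_iSup _ z)
      refine le_trans ?_ (le_iSup _ τ)
      exact le_iSup (fun _ : τ ≠ 0 => ENNReal.ofReal
        (|u (flowZ (EuclideanSpace.single i 1) τ z) - u z| / |τ| ^ α)) hτ
    have h2 := ENNReal.toReal_mono hfin h1
    rw [ENNReal.toReal_ofReal (by positivity)] at h2
    have hτp : (0:ℝ) < |τ| ^ α := Real.rpow_pos_of_pos (abs_pos.2 hτ) α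
    calc |u (flowZ (EuclideanSpace.single i 1) τ z) - u z|
        = |u (flowZ (EuclideanSpace.single i 1) τ z) - u z| / |τ| ^ α * |τ| ^ α := by
          field_simp
      _ ≤ (semiZ i α u).toReal * |τ| ^ α := mul_le_mul_of_nonneg_right h2 hτp.le

lemma semiY_pt {ϑ α : ℝ} (hα : 0 < α) (hϑ : 0 < ϑ) {u : Pt d → ℝ}
    (hfin : semiY ϑ α u ≠ ⊤) (z : Pt d) (τ : ℝ) :
    |u (flowY τ z) - u z| ≤ (semiY ϑ α u).toReal * |τ| ^ (α / ϑ) := by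
  rcases eq_or_ne τ 0 with rfl | hτ
  · simp [Real.zero_rpow (by positivity : (α / ϑ) ≠ 0)]
  · have h1 : ENNReal.ofReal (|u (flowY τ z) - u z| / |τ| ^ (α / ϑ)) ≤ semiY ϑ α u := by
      refine le_trans ?_ (le_iSup _ z)
      refine le_trans ?_ (le_iSup _ τ)
      exact le_iSup (fun _ : τ ≠ 0 => ENNReal.ofReal (|u (flowY τ z) - u z| / |τ| ^ (α / ϑ))) hτ
    have h2 := ENNReal.toReal_mono hfin h1
    rw [ENNReal.toReal_ofReal (by positivity)] at h2
    have hτp : (0:ℝ) < |τ| ^ (α / ϑ) := Real.rpow_pos_of_pos (abs_pos.2 hτ) _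
    calc |u (flowY τ z) - u z| = |u (flowY τ z) - u z| / |τ| ^ (α / ϑ) * |τ| ^ (α / ϑ) := by
          field_simp
      _ ≤ _ := mul_le_mul_of_nonneg_right h2 hτp.le

/-- seminorm inclusion lemmas -/
lemma semiZ_le_hNorm {ϑ α : ℝ} (hα1 : α ≤ 1) (m : ℕ) (u : Pt d → ℝ) (i : Fin d) :
    semiZ i α u ≤ hNormAux ϑ m α u := by
  have hsum : semiZ i α u ≤ ∑ j, semiZ j α u :=
    Finset.single_le_sum (f := fun j => semiZ j α u) (fun j _ => zero_le) (Finset.mem_univ i)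
  cases m with
  | zero => exact le_add_left hsum
  | succ n =>
    simp only [hNormAux]
    split_ifs with h1 h2 h3
    · exact le_add_left hsum
    · exact le_add_left hsum
    · exact absurd (by rw [min_eq_left (le_of_not_gt h3)]; exact hα1) h1
    · exact absurd (hα1.trans (le_max_left 1 ϑ)) h2

lemma semiY_le_hNorm {ϑ α : ℝ} (hαϑ : α ≤ ϑ) (m : ℕ) (u : Pt d → ℝ) :
    semiY ϑ α u ≤ hNormAux ϑ m α u := by
  cases m with
  | zero => exact le_self_add
  | succ n =>
    simp only [hNormAux]
    split_ifs with h1 h2 h3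
    · exact le_self_add
    · exact absurd (by rw [min_eq_right h3.le]; exact hαϑ) h1
    · exact le_self_add
    · exact absurd (hαϑ.trans (le_max_right 1 ϑ)) h2



lemma vinc {α : ℝ} (hα : 0 < α) {u : Pt d → ℝ} (hfin : ∀ i, semiZ i α u ≠ ⊤)
    (z : Pt d) (η : E d) :
    |u (vsh η z) - u z| ≤ (∑ i, (semiZ i α u).toReal) * ‖η‖ ^ α := by
  classical
  set η' : ℕ → E d := fun j => if hj : j < d then η ⟨j, hj⟩ • EuclideanSpace.single ⟨j, hj⟩ (1:ℝ) else 0 with hη'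
  set t : ℕ → ℝ := fun j => if hj : j < d then (semiZ ⟨j, hj⟩ α u).toReal else 0 with ht
  have key : ∀ k : ℕ, |u (vsh (∑ j ∈ Finset.range k, η' j) z) - u z|
      ≤ (∑ j ∈ Finset.range k, t j) * ‖η‖ ^ α := by
    intro k
    induction k with
    | zero => simp
    | succ k ih =>
      rw [Finset.sum_range_succ, Finset.sum_range_succ]
      by_cases hk : k < d
      · have hstep : vsh (∑ j ∈ Finset.range k, η' j + η' k) z
            = flowZ (EuclideanSpace.single ⟨k, hk⟩ 1) (η ⟨k, hk⟩)
              (vsh (∑ j ∈ Finset.range k, η' j) z) := by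
          simp only [vsh, flowZ, hη', dif_pos hk]
          exact Prod.ext rfl (Prod.ext rfl ((add_assoc _ _ _).symm))
        rw [hstep]
        have h1 := semiZ_pt hα (hfin ⟨k, hk⟩) (vsh (∑ j ∈ Finset.range k, η' j) z) (η ⟨k, hk⟩)
        have h2 : |η ⟨k, hk⟩| ^ α ≤ ‖η‖ ^ α :=
          Real.rpow_le_rpow (abs_nonneg _) (abs_coord_le η ⟨k, hk⟩) hα.le
        calc |u (flowZ (EuclideanSpace.single ⟨k, hk⟩ 1) (η ⟨k, hk⟩)
                (vsh (∑ j ∈ Finset.range k, η' j) z)) - u z|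
            ≤ |u (flowZ (EuclideanSpace.single ⟨k, hk⟩ 1) (η ⟨k, hk⟩)
                (vsh (∑ j ∈ Finset.range k, η' j) z))
                - u (vsh (∑ j ∈ Finset.range k, η' j) z)|
              + |u (vsh (∑ j ∈ Finset.range k, η' j) z) - u z| := abs_sub_le _ _ _
          _ ≤ (semiZ ⟨k, hk⟩ α u).toReal * |η ⟨k, hk⟩| ^ α
              + (∑ j ∈ Finset.range k, t j) * ‖η‖ ^ α := add_le_add h1 ih
          _ ≤ (∑ j ∈ Finset.range k, t j + t k) * ‖η‖ ^ α := by
              rw [add_mul]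
              have : (semiZ ⟨k, hk⟩ α u).toReal * |η ⟨k, hk⟩| ^ α ≤ t k * ‖η‖ ^ α := by
                rw [ht]; simp only [dif_pos hk]
                exact mul_le_mul_of_nonneg_left h2 ENNReal.toReal_nonneg
              linarith
      · simp only [hη', ht, dif_neg hk, add_zero]
        exact ih
  have hSd : (∑ j ∈ Finset.range d, η' j) = η := by
    rw [← Fin.sum_univ_eq_sum_range η' d]
    rw [show (∑ i : Fin d, η' i) = ∑ i : Fin d, η i • EuclideanSpace.single i (1:ℝ) from
      Finset.sum_congr rfl (fun i _ => by simp [hη', i.isLt])]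
    exact sum_coord_single η
  have htd : (∑ j ∈ Finset.range d, t j) = ∑ i, (semiZ i α u).toReal := by
    rw [← Fin.sum_univ_eq_sum_range t d]
    exact Finset.sum_congr rfl (fun i _ => by simp [ht, i.isLt])
  have := key d
  rw [hSd, htd] at this
  exact this

/-- The constant produced by the commutator argument. -/
def coreC (d : ℕ) (cψ cφ : ℝ) : ℝ :=
  (2 + (((d:ℝ) + 2) * cψ + d)) + (2 * d + d * (((d:ℝ) + 2) * cφ + 1))

lemma coreC_pos {cψ cφ : ℝ} (hcψ : 0 ≤ cψ) (hcφ : 0 ≤ cφ) : 0 < coreC d cψ cφ := by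
  unfold coreC
  have h1 : (0:ℝ) ≤ (d:ℝ) := Nat.cast_nonneg d
  have h2 : (0:ℝ) ≤ ((d:ℝ) + 2) * cψ := by positivity
  have h3 : (0:ℝ) ≤ (d:ℝ) * (((d:ℝ) + 2) * cφ + 1) := by positivity
  linarith

/-- The core commutator estimate. -/
theorem core {ϑ α : ℝ} (hϑ : 0 < ϑ) (hα0 : 0 < α) (hα1 : α ≤ 1 + ϑ)
    {cψ cφ : ℝ} (hcψ : 0 ≤ cψ) (hcφ : 0 ≤ cφ)
    (u : Pt d → ℝ) (Ntot : ℝ≥0∞) (hfin : Ntot ≠ ⊤)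
    (factY : semiY ϑ α u ≤ Ntot ∨
      ((∀ p, HasLieAt flowY u p) ∧ 0 < α - ϑ ∧ α - ϑ ≤ 1 ∧ ∃ Nψ : ℝ≥0∞, Nψ ≤ Ntot ∧
        (∀ i, semiZ i (α - ϑ) (lieY u) ≤ Nψ) ∧
        ∀ z ξ, |lieY u z - lieY u (xsh ξ z)| ≤ cψ * Nψ.toReal * ‖ξ‖ ^ ((α - ϑ)/(1+ϑ))))
    (factZ : (∀ i, semiZ i α u ≤ Ntot) ∨
      ((∀ (i : Fin d) p, HasLieAt (flowZ (EuclideanSpace.single i 1)) u p) ∧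
        0 < α - 1 ∧ α - 1 ≤ ϑ ∧
        ∀ i : Fin d, ∃ Nφ : ℝ≥0∞, Nφ ≤ Ntot ∧ semiY ϑ (α - 1) (dv i u) ≤ Nφ ∧
          ∀ z ξ, |dv i u z - dv i u (xsh ξ z)| ≤ cφ * Nφ.toReal * ‖ξ‖ ^ ((α - 1)/(1+ϑ)))) :
    ∀ (z : Pt d) (h : E d),
      |u z - u (xsh h z)| ≤ coreC d cψ cφ * Ntot.toReal * ‖h‖ ^ (α/(1+ϑ)) := by
  classical
  intro z h
  have h1ϑ : (0:ℝ) < 1 + ϑ := by linarith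
  have he0 : 0 < α/(1+ϑ) := by positivity
  rcases eq_or_ne h 0 with rfl | hne
  · simp [Real.zero_rpow he0.ne']
  -- setup
  set H : ℝ := ‖h‖ with hHdef
  have hH : 0 < H := norm_pos_iff.mpr hne
  set e : ℝ := α/(1+ϑ) with hedef
  set τ : ℝ := H ^ (ϑ/(1+ϑ)) with hτdef
  have hτ : 0 < τ := Real.rpow_pos_of_pos hH _
  set η : E d := (-τ⁻¹) • h with hηdef
  have hτη : τ • η = -h := by
    rw [hηdef, smul_smul, mul_neg, mul_inv_cancel₀ hτ.ne']
    exact neg_one_smul ℝ h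
  have hηn : ‖η‖ = τ⁻¹ * H := by
    rw [hηdef, norm_smul, Real.norm_eq_abs, abs_neg, abs_of_pos (inv_pos.2 hτ)]
  have hτn : τ * ‖η‖ = H := by
    rw [hηn, ← mul_assoc, mul_inv_cancel₀ hτ.ne', one_mul]
  -- rpow toolkit
  have hpowτ : ∀ a : ℝ, τ ^ (a/ϑ) = H ^ (a/(1+ϑ)) := by
    intro a
    rw [hτdef, ← Real.rpow_mul hH.le]
    congr 1
    field_simp
  have hpowmul : ∀ a b : ℝ, H ^ (a/(1+ϑ)) * H ^ (b/(1+ϑ)) = H ^ ((a+b)/(1+ϑ)) := by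
    intro a b
    rw [← Real.rpow_add hH]
    congr 1
    ring
  have hηH : ‖η‖ = H ^ ((1:ℝ)/(1+ϑ)) := by
    rw [hηn, inv_mul_eq_div, hτdef]
    rw [show (1:ℝ)/(1+ϑ) = 1 - ϑ/(1+ϑ) by field_simp; ring]
    rw [Real.rpow_sub hH, Real.rpow_one]
  have hηpow : ∀ a : ℝ, ‖η‖ ^ a = H ^ (a/(1+ϑ)) := by
    intro a
    rw [hηH, ← Real.rpow_mul hH.le]
    congr 1
    field_simp
  have hτe : τ * H ^ ((α-ϑ)/(1+ϑ)) = H ^ e := by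
    rw [hτdef]
    rw [show ϑ/(1+ϑ) = ϑ/(1+ϑ) from rfl]
    calc H ^ (ϑ/(1+ϑ)) * H ^ ((α-ϑ)/(1+ϑ)) = H ^ ((ϑ + (α - ϑ))/(1+ϑ)) := hpowmul _ _
      _ = H ^ e := by rw [hedef]; congr 1; ring
  have hHe0 : (0:ℝ) ≤ H ^ e := Real.rpow_nonneg hH.le _
  -- points
  set z1 : Pt d := flowY τ z with hz1
  set z4 : Pt d := xsh h z with hz4
  set z3 : Pt d := vsh η z4 with hz3
  set z2 : Pt d := vsh η z1 with hz2
  have hF1 : flowY τ z3 = z2 := by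
    rw [hz3, hz2, hz1, hz4]
    simp only [flowY, vsh, xsh]
    refine Prod.ext rfl (Prod.ext ?_ rfl)
    show z.2.1 + h + τ • (z.2.2 + η) = z.2.1 + τ • z.2.2
    rw [smul_add, hτη]
    abel
  set N : ℝ := Ntot.toReal with hNdef
  have hN0 : 0 ≤ N := ENNReal.toReal_nonneg
  set K : ℝ := (d:ℝ) + 2 with hKdef
  have hK1 : 1 ≤ K := by rw [hKdef]; have := Nat.cast_nonneg (α := ℝ) d; linarith
  have hK0 : 0 ≤ K := by linarith
  have hd0 : (0:ℝ) ≤ d := Nat.cast_nonneg d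
  -- Y part
  have hY : |(u z1 - u z) + (u z3 - u z2)| ≤ (2 + (K * cψ + d)) * (N * H ^ e) := by
    rcases factY with hsY | ⟨hLie, hβ0, hβ1, Nψ, hNψle, hsZψ, hx⟩
    · have hfinY : semiY ϑ α u ≠ ⊤ := ne_top_of_le_ne_top hfin hsY
      have hYle : (semiY ϑ α u).toReal ≤ N := ENNReal.toReal_mono hfin hsY
      have b1 : |u z1 - u z| ≤ N * H ^ e := by
        have := semiY_pt hα0 hϑ hfinY z τ
        rw [abs_of_pos hτ, hpowτ α] at this
        rw [hz1]
        calc |u (flowY τ z) - u z| ≤ (semiY ϑ α u).toReal * H ^ (α/(1+ϑ)) := this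
          _ ≤ N * H ^ e := by rw [hedef]; exact mul_le_mul_of_nonneg_right hYle hHe0
      have b2 : |u z3 - u z2| ≤ N * H ^ e := by
        rw [← hF1, abs_sub_comm]
        have := semiY_pt hα0 hϑ hfinY z3 τ
        rw [abs_of_pos hτ, hpowτ α] at this
        calc |u (flowY τ z3) - u z3| ≤ (semiY ϑ α u).toReal * H ^ (α/(1+ϑ)) := this
          _ ≤ N * H ^ e := by rw [hedef]; exact mul_le_mul_of_nonneg_right hYle hHe0
      have hextra : 0 ≤ K * cψ + (d:ℝ) := by positivity
      have hNH : 0 ≤ N * H ^ e := by positivity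
      calc |(u z1 - u z) + (u z3 - u z2)| ≤ |u z1 - u z| + |u z3 - u z2| := abs_add_le _ _
        _ ≤ 2 * (N * H ^ e) := by linarith
        _ ≤ (2 + (K * cψ + d)) * (N * H ^ e) :=
            mul_le_mul_of_nonneg_right (by linarith) hNH
    · set β : ℝ := α - ϑ with hβdef
      have hNψfin : Nψ ≠ ⊤ := ne_top_of_le_ne_top hfin hNψle
      have hNψR : Nψ.toReal ≤ N := ENNReal.toReal_mono hfin hNψle
      have hNψ0 : 0 ≤ Nψ.toReal := ENNReal.toReal_nonneg
      have hγ0 : 0 ≤ β/(1+ϑ) := by positivity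
      have hγ1 : β/(1+ϑ) ≤ 1 := by
        rw [div_le_one h1ϑ]; linarith
      set Cd : ℝ := Nψ.toReal * (K * cψ + d) * H ^ (β/(1+ϑ)) with hCddef
      have hCd0 : 0 ≤ Cd := by positivity
      have hFder : ∀ s, HasDerivAt (fun s' => u (flowY s' z) - u (flowY s' z3))
          (lieY u (flowY s z) - lieY u (flowY s z3)) s := fun s =>
        (hasDerivAt_of_lieY hLie z s).sub (hasDerivAt_of_lieY hLie z3 s)
      have bound : ∀ s ∈ Set.Icc (0:ℝ) 1,
          |lieY u (flowY (s * τ) z) - lieY u (flowY (s * τ) z3)| ≤ Cd := by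
        intro s hs
        set s' : ℝ := s * τ with hs'def
        have hs'0 : 0 ≤ s' := mul_nonneg hs.1 hτ.le
        have hs'τ : s' ≤ τ := by
          calc s' = s * τ := rfl
            _ ≤ 1 * τ := mul_le_mul_of_nonneg_right hs.2 hτ.le
            _ = τ := one_mul τ
        set A : Pt d := flowY s' z with hAdef
        set B : Pt d := vsh η A with hBdef
        set ξ : E d := h + s' • η with hξdef
        have hpt : flowY s' z3 = xsh ξ B := by
          rw [hz3, hz4, hBdef, hAdef, hξdef]
          simp only [flowY, vsh, xsh]
          refine Prod.ext rfl (Prod.ext ?_ rfl)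
          show z.2.1 + h + s' • (z.2.2 + η) = z.2.1 + s' • z.2.2 + (h + s' • η)
          rw [smul_add]
          abel
        have hξn : ‖ξ‖ ≤ K * H := by
          calc ‖ξ‖ ≤ ‖h‖ + ‖s' • η‖ := norm_add_le _ _
            _ = H + |s'| * ‖η‖ := by rw [norm_smul, Real.norm_eq_abs]
            _ ≤ H + τ * ‖η‖ := by
                have : |s'| ≤ τ := by rw [abs_of_nonneg hs'0]; exact hs'τ
                have := mul_le_mul_of_nonneg_right this (norm_nonneg η)
                linarith
            _ = H + H := by rw [hτn]
            _ ≤ K * H := by nlinarith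
        have hT1 : |lieY u (xsh ξ B) - lieY u B| ≤ cψ * Nψ.toReal * (K * (H ^ (β/(1+ϑ)))) := by
          rw [abs_sub_comm]
          refine (hx B ξ).trans ?_
          have h1 : ‖ξ‖ ^ (β/(1+ϑ)) ≤ (K * H) ^ (β/(1+ϑ)) :=
            Real.rpow_le_rpow (norm_nonneg ξ) hξn hγ0
          have h2 : (K * H) ^ (β/(1+ϑ)) = K ^ (β/(1+ϑ)) * H ^ (β/(1+ϑ)) :=
            Real.mul_rpow hK0 hH.le
          have h3 : K ^ (β/(1+ϑ)) ≤ K := by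
            calc K ^ (β/(1+ϑ)) ≤ K ^ (1:ℝ) := Real.rpow_le_rpow_of_exponent_le hK1 hγ1
              _ = K := Real.rpow_one K
          have h4 : ‖ξ‖ ^ (β/(1+ϑ)) ≤ K * H ^ (β/(1+ϑ)) := by
            refine h1.trans ?_
            rw [h2]
            exact mul_le_mul_of_nonneg_right h3 (Real.rpow_nonneg hH.le _)
          have := mul_le_mul_of_nonneg_left h4 (by positivity : 0 ≤ cψ * Nψ.toReal)
          linarith
        have hfinZψ : ∀ i, semiZ i β (lieY u) ≠ ⊤ := fun i =>
          ne_top_of_le_ne_top hNψfin (hsZψ i)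
        have hT2 : |lieY u B - lieY u A| ≤ (d:ℝ) * Nψ.toReal * H ^ (β/(1+ϑ)) := by
          rw [hBdef]
          refine (vinc hβ0 hfinZψ A η).trans ?_
          rw [hηpow β]
          have hsum : (∑ i, (semiZ i β (lieY u)).toReal) ≤ (d:ℝ) * Nψ.toReal := by
            calc (∑ i, (semiZ i β (lieY u)).toReal)
                ≤ ∑ _i : Fin d, Nψ.toReal :=
                  Finset.sum_le_sum (fun i _ => ENNReal.toReal_mono hNψfin (hsZψ i))
              _ = (d:ℝ) * Nψ.toReal := by simp [mul_comm]
          exact mul_le_mul_of_nonneg_right hsum (Real.rpow_nonneg hH.le _)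
        calc |lieY u (flowY s' z) - lieY u (flowY s' z3)|
            = |lieY u (flowY s' z3) - lieY u (flowY s' z)| := abs_sub_comm _ _
          _ = |lieY u (xsh ξ B) - lieY u A| := by rw [hpt, hAdef]
          _ ≤ |lieY u (xsh ξ B) - lieY u B| + |lieY u B - lieY u A| := abs_sub_le _ _ _
          _ ≤ cψ * Nψ.toReal * (K * (H ^ (β/(1+ϑ)))) + (d:ℝ) * Nψ.toReal * H ^ (β/(1+ϑ)) :=
              add_le_add hT1 hT2
          _ = Cd := by rw [hCddef]; ring
      have hmvt := abs_sub_le_mvt hCd0 hFder bound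
      have hYeq : (u z1 - u z) + (u z3 - u z2) =
          ((fun s' => u (flowY s' z) - u (flowY s' z3)) τ
            - (fun s' => u (flowY s' z) - u (flowY s' z3)) 0) := by
        simp only [flowY_zero, hF1]
        rw [hz1]
        ring
      rw [hYeq]
      refine hmvt.trans ?_
      rw [abs_of_pos hτ]
      have hext2 : 0 ≤ K * cψ + (d:ℝ) := by positivity
      have hNH2 : 0 ≤ N * H ^ e := mul_nonneg hN0 hHe0
      calc Cd * τ = Nψ.toReal * (K * cψ + d) * (τ * H ^ (β/(1+ϑ))) := by rw [hCddef]; ring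
        _ = Nψ.toReal * (K * cψ + d) * H ^ e := by rw [hβdef, hτe]
        _ = (K * cψ + d) * (Nψ.toReal * H ^ e) := by ring
        _ ≤ (K * cψ + d) * (N * H ^ e) :=
            mul_le_mul_of_nonneg_left (mul_le_mul_of_nonneg_right hNψR hHe0) hext2
        _ ≤ (2 + (K * cψ + d)) * (N * H ^ e) :=
            mul_le_mul_of_nonneg_right (by linarith) hNH2
  -- Z part
  have hZ : |(u z2 - u z1) + (u z4 - u z3)| ≤ (2 * d + d * (K * cφ + 1)) * (N * H ^ e) := by
    rcases factZ with hsZ | ⟨hZlie, hβ0, hβϑ, hdata⟩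
    · have hfinZ : ∀ i, semiZ i α u ≠ ⊤ := fun i => ne_top_of_le_ne_top hfin (hsZ i)
      have hsum : (∑ i, (semiZ i α u).toReal) ≤ (d:ℝ) * N := by
        calc (∑ i, (semiZ i α u).toReal) ≤ ∑ _i : Fin d, N :=
              Finset.sum_le_sum (fun i _ => ENNReal.toReal_mono hfin (hsZ i))
          _ = (d:ℝ) * N := by simp [mul_comm]
      have b1 : |u z2 - u z1| ≤ (d:ℝ) * N * H ^ e := by
        rw [hz2]
        refine (vinc hα0 hfinZ z1 η).trans ?_
        rw [hηpow α, ← hedef]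
        exact mul_le_mul_of_nonneg_right hsum hHe0
      have b2 : |u z4 - u z3| ≤ (d:ℝ) * N * H ^ e := by
        rw [abs_sub_comm, hz3]
        refine (vinc hα0 hfinZ z4 η).trans ?_
        rw [hηpow α, ← hedef]
        exact mul_le_mul_of_nonneg_right hsum hHe0
      have hNH : 0 ≤ N * H ^ e := by positivity
      have hext : 0 ≤ K * cφ + 1 := by positivity
      calc |(u z2 - u z1) + (u z4 - u z3)| ≤ |u z2 - u z1| + |u z4 - u z3| := abs_add_le _ _
        _ ≤ 2 * ((d:ℝ) * N * H ^ e) := by linarith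
        _ = 2 * (d:ℝ) * (N * H ^ e) := by ring
        _ ≤ (2 * d + d * (K * cφ + 1)) * (N * H ^ e) :=
            mul_le_mul_of_nonneg_right (by nlinarith [mul_nonneg hd0 hext]) hNH
    · set β : ℝ := α - 1 with hβdef
      have hγ0 : 0 ≤ β/(1+ϑ) := by positivity
      have hγ1 : β/(1+ϑ) ≤ 1 := by rw [div_le_one h1ϑ]; linarith
      -- telescoping setup
      set η' : ℕ → E d := fun j =>
        if hj : j < d then η ⟨j, hj⟩ • EuclideanSpace.single ⟨j, hj⟩ (1:ℝ) else 0 with hη'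
      set S : ℕ → E d := fun k => ∑ j ∈ Finset.range k, η' j with hSdef
      have hSd : S d = η := by
        rw [hSdef]
        simp only
        rw [← Fin.sum_univ_eq_sum_range η' d]
        rw [show (∑ i : Fin d, η' i) = ∑ i : Fin d, η i • EuclideanSpace.single i (1:ℝ) from
          Finset.sum_congr rfl (fun i _ => by simp [hη', i.isLt])]
        exact sum_coord_single η
      have hS0 : S 0 = 0 := by simp [hSdef]
      have hSnorm : ∀ k, k ≤ d → ‖S k‖ ≤ (d:ℝ) * ‖η‖ := by
        intro k hkd
        calc ‖S k‖ ≤ ∑ j ∈ Finset.range k, ‖η' j‖ := norm_sum_le _ _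
          _ ≤ ∑ _j ∈ Finset.range k, ‖η‖ := by
              refine Finset.sum_le_sum (fun j _ => ?_)
              by_cases hj : j < d
              · simp only [hη', dif_pos hj]
                rw [norm_smul, EuclideanSpace.norm_single, norm_one, mul_one, Real.norm_eq_abs]
                exact abs_coord_le η _
              · simp only [hη', dif_neg hj, norm_zero]
                exact norm_nonneg η
          _ = (k:ℝ) * ‖η‖ := by simp [mul_comm]
          _ ≤ (d:ℝ) * ‖η‖ :=
              mul_le_mul_of_nonneg_right (Nat.cast_le.mpr hkd) (norm_nonneg η)
      have hβα : β + 1 = α := by rw [hβdef]; ring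
      have gid : ∀ p : Pt d, u (vsh η p) - u p
          = ∑ k ∈ Finset.range d, (u (vsh (S (k+1)) p) - u (vsh (S k) p)) := by
        intro p
        rw [Finset.sum_range_sub (f := fun k => u (vsh (S k) p))]
        rw [hSd, hS0, vsh_zero]
      have hZeq : (u z2 - u z1) + (u z4 - u z3)
          = ∑ k ∈ Finset.range d, ((u (vsh (S (k+1)) z1) - u (vsh (S k) z1))
              - (u (vsh (S (k+1)) z4) - u (vsh (S k) z4))) := by
        rw [Finset.sum_sub_distrib, ← gid z1, ← gid z4, hz2, hz3]
        ring
      rw [hZeq]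
      refine (Finset.abs_sum_le_sum_abs _ _).trans ?_
      have hterm : ∀ k ∈ Finset.range d,
          |(u (vsh (S (k+1)) z1) - u (vsh (S k) z1))
            - (u (vsh (S (k+1)) z4) - u (vsh (S k) z4))| ≤ (K * cφ + 1) * (N * H ^ e) := by
        intro k hk
        have hkd : k < d := Finset.mem_range.mp hk
        set i : Fin d := ⟨k, hkd⟩ with hidef
        obtain ⟨Nφ, hNφle, hsYφ, hxφ⟩ := hdata i
        have hNφfin : Nφ ≠ ⊤ := ne_top_of_le_ne_top hfin hNφle
        have hNφR : Nφ.toReal ≤ N := ENNReal.toReal_mono hfin hNφle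
        have hNφ0 : 0 ≤ Nφ.toReal := ENNReal.toReal_nonneg
        set ei : E d := EuclideanSpace.single i (1:ℝ) with heidef
        set q1 : Pt d := vsh (S k) z1 with hq1
        set q4 : Pt d := vsh (S k) z4 with hq4
        have hstep : ∀ p : Pt d, vsh (S (k+1)) p = flowZ ei (η i) (vsh (S k) p) := by
          intro p
          simp only [vsh, flowZ]
          refine Prod.ext rfl (Prod.ext rfl ?_)
          show p.2.2 + S (k+1) = p.2.2 + S k + η i • ei
          rw [hSdef]
          simp only
          rw [Finset.sum_range_succ]
          rw [show η' k = η i • ei from by simp [hη', heidef, hidef, hkd]]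
          exact (add_assoc _ _ _).symm
        have hΦder : ∀ s, HasDerivAt (fun s' => u (flowZ ei s' q1) - u (flowZ ei s' q4))
            (dv i u (flowZ ei s q1) - dv i u (flowZ ei s q4)) s := fun s =>
          (hasDerivAt_of_dv i (hZlie i) q1 s).sub (hasDerivAt_of_dv i (hZlie i) q4 s)
        set CΦ : ℝ := Nφ.toReal * (K * cφ + 1) * H ^ (β/(1+ϑ)) with hCΦdef
        have hCΦ0 : 0 ≤ CΦ := by positivity
        have boundΦ : ∀ s0 ∈ Set.Icc (0:ℝ) 1,
            |dv i u (flowZ ei (s0 * η i) q1) - dv i u (flowZ ei (s0 * η i) q4)| ≤ CΦ := by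
          intro s0 hs0
          set s : ℝ := s0 * η i with hsdef
          have hsabs : |s| ≤ ‖η‖ := by
            rw [hsdef, abs_mul]
            calc |s0| * |η i| ≤ 1 * ‖η‖ :=
                mul_le_mul (abs_le.mpr ⟨by linarith [hs0.1], hs0.2⟩) (abs_coord_le η i)
                  (abs_nonneg _) zero_le_one
              _ = ‖η‖ := one_mul _
          set P4 : Pt d := flowZ ei s q4 with hP4def
          set P1 : Pt d := flowZ ei s q1 with hP1def
          set Q : Pt d := flowY τ P4 with hQdef
          set ζ : E d := -h - τ • S k - (τ*s) • ei with hζdef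
          have hP1Q : P1 = xsh ζ Q := by
            rw [hP1def, hQdef, hP4def, hq1, hq4, hζdef, hz1, hz4]
            simp only [flowY, flowZ, vsh, xsh]
            refine Prod.ext rfl (Prod.ext ?_ rfl)
            show z.2.1 + τ • z.2.2
              = z.2.1 + h + τ • (z.2.2 + S k + s • ei) + (-h - τ • S k - (τ*s) • ei)
            rw [smul_add, smul_add, smul_smul]
            abel
          have hζn : ‖ζ‖ ≤ K * H := by
            have e1 : ‖ζ‖ ≤ ‖h‖ + ‖τ • S k‖ + ‖(τ*s) • ei‖ := by
              rw [hζdef]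
              calc ‖-h - τ • S k - (τ*s) • ei‖
                  ≤ ‖-h - τ • S k‖ + ‖(τ*s) • ei‖ := norm_sub_le _ _
                _ ≤ ‖-h‖ + ‖τ • S k‖ + ‖(τ*s) • ei‖ := by
                    have := norm_sub_le (-h) (τ • S k)
                    linarith
                _ = ‖h‖ + ‖τ • S k‖ + ‖(τ*s) • ei‖ := by rw [norm_neg]
            have e2 : ‖τ • S k‖ ≤ (d:ℝ) * H := by
              rw [norm_smul, Real.norm_eq_abs, abs_of_pos hτ]
              calc τ * ‖S k‖ ≤ τ * ((d:ℝ) * ‖η‖) :=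
                  mul_le_mul_of_nonneg_left (hSnorm k hkd.le) hτ.le
                _ = (d:ℝ) * (τ * ‖η‖) := by ring
                _ = (d:ℝ) * H := by rw [hτn]
            have e3 : ‖(τ*s) • ei‖ ≤ H := by
              rw [norm_smul, Real.norm_eq_abs, heidef, EuclideanSpace.norm_single]
              rw [norm_one, mul_one, abs_mul, abs_of_pos hτ]
              calc τ * |s| ≤ τ * ‖η‖ := mul_le_mul_of_nonneg_left hsabs hτ.le
                _ = H := hτn
            calc ‖ζ‖ ≤ ‖h‖ + ‖τ • S k‖ + ‖(τ*s) • ei‖ := e1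
              _ ≤ H + (d:ℝ) * H + H := by
                  have : ‖h‖ = H := rfl
                  linarith
              _ = K * H := by rw [hKdef]; ring
          have hT1 : |dv i u (xsh ζ Q) - dv i u Q| ≤ cφ * Nφ.toReal * (K * H ^ (β/(1+ϑ))) := by
            rw [abs_sub_comm]
            refine (hxφ Q ζ).trans ?_
            have h1 : ‖ζ‖ ^ (β/(1+ϑ)) ≤ (K * H) ^ (β/(1+ϑ)) :=
              Real.rpow_le_rpow (norm_nonneg ζ) hζn hγ0
            have h2 : (K * H) ^ (β/(1+ϑ)) = K ^ (β/(1+ϑ)) * H ^ (β/(1+ϑ)) :=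
              Real.mul_rpow hK0 hH.le
            have h3 : K ^ (β/(1+ϑ)) ≤ K := by
              calc K ^ (β/(1+ϑ)) ≤ K ^ (1:ℝ) := Real.rpow_le_rpow_of_exponent_le hK1 hγ1
                _ = K := Real.rpow_one K
            have h4 : ‖ζ‖ ^ (β/(1+ϑ)) ≤ K * H ^ (β/(1+ϑ)) := by
              refine h1.trans ?_
              rw [h2]
              exact mul_le_mul_of_nonneg_right h3 (Real.rpow_nonneg hH.le _)
            have := mul_le_mul_of_nonneg_left h4 (by positivity : 0 ≤ cφ * Nφ.toReal)
            linarith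
          have hfinYφ : semiY ϑ β (dv i u) ≠ ⊤ := ne_top_of_le_ne_top hNφfin hsYφ
          have hT2 : |dv i u Q - dv i u P4| ≤ Nφ.toReal * H ^ (β/(1+ϑ)) := by
            rw [hQdef]
            refine (semiY_pt hβ0 hϑ hfinYφ P4 τ).trans ?_
            rw [abs_of_pos hτ, hpowτ β]
            exact mul_le_mul_of_nonneg_right (ENNReal.toReal_mono hNφfin hsYφ)
              (Real.rpow_nonneg hH.le _)
          calc |dv i u (flowZ ei s q1) - dv i u (flowZ ei s q4)|
              = |dv i u (xsh ζ Q) - dv i u P4| := by rw [← hP1Q, hP1def, hP4def]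
            _ ≤ |dv i u (xsh ζ Q) - dv i u Q| + |dv i u Q - dv i u P4| := abs_sub_le _ _ _
            _ ≤ cφ * Nφ.toReal * (K * H ^ (β/(1+ϑ))) + Nφ.toReal * H ^ (β/(1+ϑ)) :=
                add_le_add hT1 hT2
            _ = CΦ := by rw [hCΦdef]; ring
        have hmvtΦ := abs_sub_le_mvt hCΦ0 hΦder boundΦ
        have hDk : (u (vsh (S (k+1)) z1) - u (vsh (S k) z1))
            - (u (vsh (S (k+1)) z4) - u (vsh (S k) z4))
            = (fun s' => u (flowZ ei s' q1) - u (flowZ ei s' q4)) (η i)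
              - (fun s' => u (flowZ ei s' q1) - u (flowZ ei s' q4)) 0 := by
          simp only [flowZ_zero]
          rw [hstep z1, hstep z4, hq1, hq4]
          ring
        rw [hDk]
        refine hmvtΦ.trans ?_
        have habsle : |η i| ≤ ‖η‖ := abs_coord_le η i
        calc CΦ * |η i| ≤ CΦ * ‖η‖ := mul_le_mul_of_nonneg_left habsle hCΦ0
          _ = Nφ.toReal * (K * cφ + 1) * (H ^ (β/(1+ϑ)) * H ^ ((1:ℝ)/(1+ϑ))) := by
              rw [hCΦdef, hηH]; ring
          _ = Nφ.toReal * (K * cφ + 1) * H ^ e := by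
              rw [hpowmul, hedef]
              congr 2
              rw [← hβα]
          _ = (K * cφ + 1) * (Nφ.toReal * H ^ e) := by ring
          _ ≤ (K * cφ + 1) * (N * H ^ e) :=
              mul_le_mul_of_nonneg_left (mul_le_mul_of_nonneg_right hNφR hHe0)
                (by positivity)
      calc (∑ k ∈ Finset.range d, |(u (vsh (S (k+1)) z1) - u (vsh (S k) z1))
              - (u (vsh (S (k+1)) z4) - u (vsh (S k) z4))|)
          ≤ ∑ _k ∈ Finset.range d, (K * cφ + 1) * (N * H ^ e) := Finset.sum_le_sum hterm
        _ = (d:ℝ) * ((K * cφ + 1) * (N * H ^ e)) := by simp [mul_comm]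
        _ = (d:ℝ) * (K * cφ + 1) * (N * H ^ e) := by ring
        _ ≤ (2 * d + d * (K * cφ + 1)) * (N * H ^ e) := by
            have hNH : 0 ≤ N * H ^ e := mul_nonneg hN0 hHe0
            refine mul_le_mul_of_nonneg_right ?_ hNH
            nlinarith [mul_nonneg hd0 (mul_nonneg hK0 hcφ)]
  -- conclusion
  have hiden : u z4 - u z = ((u z1 - u z) + (u z3 - u z2)) + ((u z2 - u z1) + (u z4 - u z3)) := by
    ring
  have hfinal : |u z - u (xsh h z)|
      ≤ ((2 + (K * cψ + d)) + (2 * d + d * (K * cφ + 1))) * (N * H ^ e) := by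
    calc |u z - u (xsh h z)| = |u z4 - u z| := by rw [← hz4, abs_sub_comm]
      _ = |((u z1 - u z) + (u z3 - u z2)) + ((u z2 - u z1) + (u z4 - u z3))| := by rw [hiden]
      _ ≤ |(u z1 - u z) + (u z3 - u z2)| + |(u z2 - u z1) + (u z4 - u z3)| := abs_add_le _ _
      _ ≤ _ := by rw [add_mul]; exact add_le_add hY hZ
  have hCeq : coreC d cψ cφ * Ntot.toReal * H ^ e
      = ((2 + (K * cψ + d)) + (2 * d + d * (K * cφ + 1))) * (N * H ^ e) := by
    simp only [coreC, hKdef, hNdef]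
    ring
  rw [hCeq]
  exact hfinal

/-- Main induction: Hölder continuity in `x` with exponent `α/(1+ϑ)`. -/
lemma key {ϑ : ℝ} (hϑ : 0 < ϑ) (n : ℕ) : ∀ α : ℝ, 0 < α → α ≤ 1 + ϑ →
    ∃ c : ℝ, 0 < c ∧ ∀ u : Pt d → ℝ, memAux ϑ n α u →
      ∀ (z : Pt d) (h : E d),
        |u z - u (xsh h z)| ≤ c * (hNormAux ϑ n α u).toReal * ‖h‖ ^ (α/(1+ϑ)) := by
  induction n with
  | zero =>
    intro α hα0 hα1
    refine ⟨coreC d 1 1, coreC_pos zero_le_one zero_le_one, fun u hmem => ?_⟩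
    simp only [memAux] at hmem
    refine core hϑ hα0 hα1 zero_le_one zero_le_one u _ hmem (Or.inl ?_) (Or.inl ?_)
    · simp only [hNormAux]
      exact le_self_add
    · intro i
      simp only [hNormAux]
      exact le_add_left (Finset.single_le_sum (f := fun j => semiZ j α u)
        (fun j _ => zero_le) (Finset.mem_univ i))
  | succ n ih =>
    intro α hα0 hα1
    by_cases hA : α ≤ min 1 ϑ
    · refine ⟨coreC d 1 1, coreC_pos zero_le_one zero_le_one, fun u hmem => ?_⟩
      simp only [memAux] at hmem
      rw [if_pos hA] at hmem
      refine core hϑ hα0 hα1 zero_le_one zero_le_one u _ hmem (Or.inl ?_) (Or.inl ?_)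
      · exact semiY_le_hNorm (hA.trans (min_le_right 1 ϑ)) (n+1) u
      · exact fun i => semiZ_le_hNorm (hA.trans (min_le_left 1 ϑ)) (n+1) u i
    · by_cases hB : α ≤ max 1 ϑ
      · by_cases hϑ1 : ϑ < 1
        · -- middle case, ϑ < 1
          have hβ0 : 0 < α - ϑ := by
            rw [min_eq_right hϑ1.le] at hA
            push_neg at hA
            linarith
          have hβ1 : α - ϑ ≤ 1 := by
            rw [max_eq_left hϑ1.le] at hB
            linarith
          obtain ⟨cψ, hcψ, hIH⟩ := ih (α - ϑ) hβ0 (by linarith)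
          refine ⟨coreC d cψ 1, coreC_pos hcψ.le zero_le_one, fun u hmem => ?_⟩
          simp only [memAux] at hmem
          rw [if_neg hA, if_pos hB, if_pos hϑ1] at hmem
          obtain ⟨hLie, hmemψ, hfin⟩ := hmem
          have hnorm : hNormAux ϑ (n+1) α u
              = hNormAux ϑ n (α - ϑ) (lieY u) + ∑ i, semiZ i α u := by
            simp only [hNormAux]
            rw [if_neg hA, if_pos hB, if_pos hϑ1]
          refine core hϑ hα0 hα1 hcψ.le zero_le_one u _ hfin
            (Or.inr ⟨hLie, hβ0, hβ1, hNormAux ϑ n (α - ϑ) (lieY u), ?_, ?_, ?_⟩)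
            (Or.inl ?_)
          · rw [hnorm]; exact le_self_add
          · exact fun i => semiZ_le_hNorm hβ1 n (lieY u) i
          · exact fun z ξ => hIH (lieY u) hmemψ z ξ
          · intro i
            refine le_trans (semiZ_le_hNorm ?_ (n+1) u i) le_rfl
            rw [max_eq_left hϑ1.le] at hB
            exact hB
        · -- middle case, ϑ ≥ 1
          have hϑ1' : (1:ℝ) ≤ ϑ := le_of_not_gt hϑ1
          have hβ0 : 0 < α - 1 := by
            rw [min_eq_left hϑ1'] at hA
            push_neg at hA
            linarith
          have hβϑ : α - 1 ≤ ϑ := by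
            rw [max_eq_right hϑ1'] at hB
            linarith
          obtain ⟨cφ, hcφ, hIH⟩ := ih (α - 1) hβ0 (by linarith)
          refine ⟨coreC d 1 cφ, coreC_pos zero_le_one hcφ.le, fun u hmem => ?_⟩
          simp only [memAux] at hmem
          rw [if_neg hA, if_pos hB, if_neg hϑ1] at hmem
          obtain ⟨hZlie, hmemφ, hfin⟩ := hmem
          have hnorm : hNormAux ϑ (n+1) α u
              = semiY ϑ α u + ∑ i, hNormAux ϑ n (α - 1) (dv i u) := by
            simp only [hNormAux]
            rw [if_neg hA, if_pos hB, if_neg hϑ1]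
          refine core hϑ hα0 hα1 zero_le_one hcφ.le u _ hfin (Or.inl ?_)
            (Or.inr ⟨hZlie, hβ0, hβϑ, fun i =>
              ⟨hNormAux ϑ n (α - 1) (dv i u), ?_, ?_, ?_⟩⟩)
          · refine semiY_le_hNorm ?_ (n+1) u
            rw [max_eq_right hϑ1'] at hB
            exact hB
          · rw [hnorm]
            exact le_add_left (Finset.single_le_sum
              (f := fun j => hNormAux ϑ n (α - 1) (dv j u))
              (fun j _ => zero_le) (Finset.mem_univ i))
          · exact semiY_le_hNorm hβϑ n (dv i u)
          · exact fun z ξ => hIH (dv i u) (hmemφ i) z ξ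
      · -- top case
        have hBlt : max 1 ϑ < α := lt_of_not_ge hB
        have h1α : 1 < α := lt_of_le_of_lt (le_max_left 1 ϑ) hBlt
        have hϑα : ϑ < α := lt_of_le_of_lt (le_max_right 1 ϑ) hBlt
        have hβ10 : 0 < α - ϑ := by linarith
        have hβ11 : α - ϑ ≤ 1 := by linarith
        have hβ20 : 0 < α - 1 := by linarith
        have hβ2ϑ : α - 1 ≤ ϑ := by linarith
        obtain ⟨cψ, hcψ, hIHψ⟩ := ih (α - ϑ) hβ10 (by linarith)
        obtain ⟨cφ, hcφ, hIHφ⟩ := ih (α - 1) hβ20 (by linarith)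
        refine ⟨coreC d cψ cφ, coreC_pos hcψ.le hcφ.le, fun u hmem => ?_⟩
        simp only [memAux] at hmem
        rw [if_neg hA, if_neg hB] at hmem
        obtain ⟨hLie, hmemψ, hZlie, hmemφ, hfin⟩ := hmem
        have hnorm : hNormAux ϑ (n+1) α u
            = hNormAux ϑ n (α - ϑ) (lieY u) + ∑ i, hNormAux ϑ n (α - 1) (dv i u) := by
          simp only [hNormAux]
          rw [if_neg hA, if_neg hB]
        refine core hϑ hα0 hα1 hcψ.le hcφ.le u _ hfin
          (Or.inr ⟨hLie, hβ10, hβ11, hNormAux ϑ n (α - ϑ) (lieY u), ?_, ?_, ?_⟩)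
          (Or.inr ⟨hZlie, hβ20, hβ2ϑ, fun i =>
            ⟨hNormAux ϑ n (α - 1) (dv i u), ?_, ?_, ?_⟩⟩)
        · rw [hnorm]; exact le_self_add
        · exact fun i => semiZ_le_hNorm hβ11 n (lieY u) i
        · exact fun z ξ => hIHψ (lieY u) hmemψ z ξ
        · rw [hnorm]
          exact le_add_left (Finset.single_le_sum
            (f := fun j => hNormAux ϑ n (α - 1) (dv j u))
            (fun j _ => zero_le) (Finset.mem_univ i))
        · exact semiY_le_hNorm hβ2ϑ n (dv i u)
        · exact fun z ξ => hIHφ (dv i u) (hmemφ i) z ξ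

end HPV

/-- Hölder continuity in the position variable: if `u ∈ C^α` with `α ∈ (0, 1+ϑ]`, then there is
`c > 0`, depending only on `d`, `ϑ` and `α`, such that
`|u(t,x,v) − u(t,x+h,v)| ≤ c ‖u‖_{C^α} |h|^{α/(ϑ+1)}` for all `(t,x,v)` and `h ∈ ℝ^d`. -/
theorem holder_in_position_variable (d : ℕ) (hd : 1 ≤ d) (ϑ : ℝ) (hϑ : 0 < ϑ)
    (α : ℝ) (hα0 : 0 < α) (hα1 : α ≤ 1 + ϑ) :
    ∃ c : ℝ, 0 < c ∧ ∀ u : Pt d → ℝ, IsHolder ϑ α u →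
      ∀ (z : Pt d) (h : EuclideanSpace ℝ (Fin d)),
        |u z - u (z.1, z.2.1 + h, z.2.2)| ≤
          c * (holderNorm ϑ α u).toReal * ‖h‖ ^ (α / (ϑ + 1)) := by
  obtain ⟨c, hc, hkey⟩ := HPV.key (d := d) hϑ (fuel ϑ α) α hα0 hα1
  refine ⟨c, hc, fun u hu z h => ?_⟩
  have := hkey u hu z h
  rw [show ϑ + 1 = 1 + ϑ from add_comm ϑ 1]
  exact this


end
end

section
/- Non-homogeneous flow composition identity: let B be a real (2d×2d) matrix with block decomposition B = [[B₁₁,B₁₂],[B₂₁,B₂₂]], let ϑ>0, τ ≥ 0, w∈ℝ^d and z=(t,x,v)∈ℝ×ℝ^{2d}. Define z₂ = e^{τZ_w}(z), z₃ = e^{τ^ϑ Y}(z₂), z₄ = e^{−τZ_w}(z₃), z₅ = e^{−τ^ϑ Y}(z₄) and z₆ = e^{−τ^{ϑ+1} Z_{B₂₂w}}(z₅). Then z₆ = (t, (x,v)ᵀ + τ^{ϑ+1}(B₁₂w, 0)ᵀ) − τ^{2ϑ+1}·(0, Σ_{n=0}^∞ ((−1)^n τ^{ϑn}/(n+2)!)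 B^{n+2}(0,w)ᵀ), where the series converges absolutely. -/
noncomputable section

/-- Points of `ℝ × ℝ^{2d}`, written `z = (t, ξ)` with `ξ = (x, v)` indexed by
`Fin d ⊕ Fin d` (`Sum.inl` for `x`, `Sum.inr` for `v`). -/
abbrev Ptb (d : ℕ) := ℝ × ((Fin d ⊕ Fin d) → ℝ)

variable {d : ℕ}

/-- Flow of `Z_h`: `e^{τ Z_h}(t, x, v) = (t, x, v + τ h)`. -/
def flowZB (h : Fin d → ℝ) (τ : ℝ) (z : Ptb d) : Ptb d :=
  (z.1, z.2 + τ • Sum.elim (0 : Fin d → ℝ) h)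

/-- Flow of the non-homogeneous drift `Y`: `e^{τY}(t, ξ) = (t + τ, exp(τB) ξ)`. -/
def flowYB (B : Matrix (Fin d ⊕ Fin d) (Fin d ⊕ Fin d) ℝ) (τ : ℝ) (z : Ptb d) : Ptb d :=
  (z.1 + τ, (NormedSpace.exp (τ • B)).mulVec z.2)

namespace NFCaux

open NormedSpace

attribute [local instance] Matrix.linftyOpNormedAddCommGroup Matrix.linftyOpNormedRing
  Matrix.linftyOpNormedAlgebra

abbrev Mat (d : ℕ) := Matrix (Fin d ⊕ Fin d) (Fin d ⊕ Fin d) ℝ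

/-- `M ↦ M.mulVec u` as a continuous linear map. -/
def L (u : (Fin d ⊕ Fin d) → ℝ) : Mat d →L[ℝ] ((Fin d ⊕ Fin d) → ℝ) :=
  LinearMap.toContinuousLinearMap
    { toFun := fun M => M.mulVec u
      map_add' := fun M N => Matrix.add_mulVec M N u
      map_smul' := fun c M => Matrix.smul_mulVec c M u }

lemma summable_aux (s : ℝ) (B : Mat d) (u : (Fin d ⊕ Fin d) → ℝ) :
    Summable (fun n : ℕ => (s ^ n / n.factorial) • (B ^ n).mulVec u) := by
  have h := expSeries_summable' (𝕂 := ℝ) (s • B)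
  have h2 : Summable fun n : ℕ => (L u) (((n.factorial : ℝ))⁻¹ • (s • B) ^ n) :=
    h.map (L u).toLinearMap.toAddMonoidHom (L u).continuous
  convert h2 using 2 with n
  simp [L, smul_pow, Matrix.smul_mulVec, smul_smul, div_eq_mul_inv, mul_comm]

lemma exp_mulVec (s : ℝ) (B : Mat d) (u : (Fin d ⊕ Fin d) → ℝ) :
    (exp (s • B)).mulVec u = ∑' n : ℕ, (s ^ n / n.factorial) • (B ^ n).mulVec u := by
  have h := expSeries_summable' (𝕂 := ℝ) (s • B)
  have h0 : (exp (s • B)).mulVec u = (L u) (exp (s • B)) := rfl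
  rw [h0, exp_eq_tsum ℝ, (L u).map_tsum h]
  congr 1; funext n
  simp [L, smul_pow, Matrix.smul_mulVec, smul_smul, div_eq_mul_inv, mul_comm]

lemma cancel (s : ℝ) (B : Mat d) : exp ((-s) • B) * exp (s • B) = 1 := by
  rw [← Matrix.exp_add_of_commute _ _
    (((Commute.refl B).smul_left (-s)).smul_right s)]
  simp [← add_smul]

end NFCaux

/-- Non-homogeneous flow composition identity: with
`z₂ = e^{τ Z_w}(z)`, `z₃ = e^{τ^ϑ Y}(z₂)`, `z₄ = e^{−τ Z_w}(z₃)`, `z₅ = e^{−τ^ϑ Y}(z₄)`,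
`z₆ = e^{−τ^{ϑ+1} Z_{B₂₂ w}}(z₅)`, one has
`z₆ = (t, ξ + τ^{ϑ+1}(B₁₂ w, 0)) − τ^{2ϑ+1} (0, Σ_{n≥0} ((−1)^n τ^{ϑn}/(n+2)!) B^{n+2}(0,w))`,
the series converging absolutely. -/
theorem nonhomogeneous_flow_composition (d : ℕ) (hd : 1 ≤ d)
    (B : Matrix (Fin d ⊕ Fin d) (Fin d ⊕ Fin d) ℝ)
    (ϑ : ℝ) (hϑ : 0 < ϑ) (τ : ℝ) (hτ : 0 ≤ τ) (w : Fin d → ℝ) (z : Ptb d) :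
    Summable (fun n : ℕ =>
      ‖(((-1 : ℝ) ^ n * τ ^ (ϑ * n) / ((n + 2).factorial : ℝ)) •
        (B ^ (n + 2)).mulVec (Sum.elim (0 : Fin d → ℝ) w))‖) ∧
    flowZB (B.toBlocks₂₂.mulVec w) (-(τ ^ (ϑ + 1)))
        (flowYB B (-(τ ^ ϑ)) (flowZB w (-τ) (flowYB B (τ ^ ϑ) (flowZB w τ z)))) =
      (z.1, z.2 + (τ ^ (ϑ + 1)) • Sum.elim (B.toBlocks₁₂.mulVec w) (0 : Fin d → ℝ)
        - (τ ^ (2 * ϑ + 1)) •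
            ∑' n : ℕ, ((-1 : ℝ) ^ n * τ ^ (ϑ * n) / ((n + 2).factorial : ℝ)) •
              (B ^ (n + 2)).mulVec (Sum.elim (0 : Fin d → ℝ) w)) := by
  classical
  set s : ℝ := τ ^ ϑ with hs_def
  have hs : 0 ≤ s := Real.rpow_nonneg hτ ϑ
  set u : (Fin d ⊕ Fin d) → ℝ := Sum.elim (0 : Fin d → ℝ) w with hu
  set u₂ : (Fin d ⊕ Fin d) → ℝ := Sum.elim (0 : Fin d → ℝ) (B.toBlocks₂₂.mulVec w) with hu2
  have h3 : ∀ n : ℕ, τ ^ (ϑ * n) = s ^ n := fun n => by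
    rw [hs_def, Real.rpow_mul hτ, Real.rpow_natCast]
  have h1 : τ ^ (ϑ + 1) = s * τ := by
    rw [hs_def, Real.rpow_add' hτ (by positivity), Real.rpow_one]
  have h2 : τ ^ (2 * ϑ + 1) = s ^ 2 * τ := by
    have h21 : 2 * ϑ + 1 = ϑ + (ϑ + 1) := by ring
    rw [h21, Real.rpow_add' hτ (by positivity), h1, ← hs_def, sq]; ring
  have hcoef : ∀ n : ℕ, (-1 : ℝ) ^ n * τ ^ (ϑ * n) / ((n + 2).factorial : ℝ)
      = (-s) ^ n / ((n + 2).factorial : ℝ) := fun n => by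
    rw [h3]; ring
  set f : ℕ → ((Fin d ⊕ Fin d) → ℝ) :=
    fun n => ((-s) ^ n / ((n + 2).factorial : ℝ)) • (B ^ (n + 2)).mulVec u with hf
  have hBpow : ∀ n : ℕ, (B ^ (n + 2)).mulVec u = (B ^ 2).mulVec ((B ^ n).mulVec u) := fun n => by
    rw [show n + 2 = 2 + n from add_comm n 2, pow_add, ← Matrix.mulVec_mulVec]
  -- summability of the auxiliary series
  have hg : Summable (fun n : ℕ => ((-s) ^ n / ((n + 2).factorial : ℝ)) • (B ^ n).mulVec u) := by
    apply Summable.of_norm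
    have hmaj : Summable (fun n : ℕ => ‖(|s| ^ n / n.factorial) • (B ^ n).mulVec u‖) :=
      summable_norm_iff.mpr (NFCaux.summable_aux |s| B u)
    refine Summable.of_nonneg_of_le (fun n => norm_nonneg _) (fun n => ?_) hmaj
    rw [norm_smul, norm_smul, Real.norm_eq_abs, Real.norm_eq_abs]
    have hb : |(-s) ^ n / ((n + 2).factorial : ℝ)| ≤ |(|s| ^ n / (n.factorial : ℝ))| := by
      rw [abs_div, abs_pow, abs_neg, Nat.abs_cast,
        abs_of_nonneg (by positivity : (0:ℝ) ≤ |s| ^ n / (n.factorial : ℝ))]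
      gcongr <;>
        first
          | positivity
          | omega
          | exact_mod_cast Nat.factorial_le (by omega)
          | exact_mod_cast Nat.factorial_pos n
    exact mul_le_mul_of_nonneg_right hb (norm_nonneg _)
  have hfsum : Summable f := by
    set T : ((Fin d ⊕ Fin d) → ℝ) →L[ℝ] ((Fin d ⊕ Fin d) → ℝ) :=
      LinearMap.toContinuousLinearMap ((B ^ 2).mulVecLin) with hT
    have h2' : Summable fun n : ℕ =>
        T (((-s) ^ n / ((n + 2).factorial : ℝ)) • (B ^ n).mulVec u) :=
      hg.map T.toLinearMap.toAddMonoidHom T.continuous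
    convert h2' using 2 with n
    rw [hf]
    simp only [T, LinearMap.coe_toContinuousLinearMap', Matrix.mulVecLin_apply, map_smul,
      hBpow n]
  have hnorm : Summable (fun n : ℕ =>
      ‖(((-1 : ℝ) ^ n * τ ^ (ϑ * n) / ((n + 2).factorial : ℝ)) •
        (B ^ (n + 2)).mulVec (Sum.elim (0 : Fin d → ℝ) w))‖) := by
    simp only [hcoef]
    exact summable_norm_iff.mpr hfsum
  refine ⟨hnorm, ?_⟩
  -- the flow composition
  set a : ℕ → ((Fin d ⊕ Fin d) → ℝ) :=
    fun n => ((-s) ^ n / n.factorial) • (B ^ n).mulVec u with ha_def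
  have ha : Summable a := NFCaux.summable_aux (-s) B u
  have hexp : (NormedSpace.exp ((-s) • B)).mulVec u = ∑' n, a n :=
    NFCaux.exp_mulVec (-s) B u
  have hsplit : (∑' n, a n) = a 0 + (a 1 + ∑' n, a (n + 2)) := by
    rw [Summable.tsum_eq_zero_add ha, Summable.tsum_eq_zero_add ((summable_nat_add_iff 1).mpr ha)]
  have htail : (∑' n, a (n + 2)) = s ^ 2 • ∑' n, f n := by
    have hterm : ∀ n, a (n + 2) = s ^ 2 • f n := fun n => by
      rw [ha_def, hf]
      simp only [smul_smul]
      congr 1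
      rw [pow_add]; ring
    rw [tsum_congr hterm, Summable.tsum_const_smul _ hfsum]
  have ha0 : a 0 = u := by simp [ha_def, Matrix.one_mulVec]
  have ha1 : a 1 = (-s) • B.mulVec u := by simp [ha_def]
  have hBu : B.mulVec u = Sum.elim (B.toBlocks₁₂.mulVec w) (0 : Fin d → ℝ) + u₂ := by
    conv_lhs => rw [← Matrix.fromBlocks_toBlocks B]
    rw [hu, Matrix.fromBlocks_mulVec]
    funext i
    cases i <;>
      simp [hu2, Matrix.mulVec_zero, Sum.elim_inl, Sum.elim_inr, Pi.add_apply]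
  -- unfold the flows
  simp only [flowZB, flowYB]
  refine Prod.ext ?_ ?_
  · show z.1 + τ ^ ϑ + -(τ ^ ϑ) = z.1
    ring
  · show (NormedSpace.exp (-(τ ^ ϑ) • B)).mulVec
        ((NormedSpace.exp ((τ ^ ϑ) • B)).mulVec (z.2 + τ • u) + (-τ) • u)
        + (-(τ ^ (ϑ + 1))) • u₂ = _
    have hneg : -(τ ^ ϑ) • B = (-s) • B := by rw [hs_def]
    rw [hneg, Matrix.mulVec_add, Matrix.mulVec_mulVec, NFCaux.cancel, Matrix.one_mulVec,
      Matrix.mulVec_smul, hexp, hsplit, htail, ha0, ha1, hBu, h1, h2]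
    simp only [hcoef]
    have : (∑' (n : ℕ), ((-s) ^ n / ((n + 2).factorial : ℝ)) •
        (B ^ (n + 2)).mulVec u) = ∑' n, f n := rfl
    rw [this]
    set S := ∑' n, f n
    set e := Sum.elim (B.toBlocks₁₂.mulVec w) (0 : Fin d → ℝ)
    module
end
end
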